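/- arXiv:0704.3935 — 5 statements merged into one kernel-verified Lean document; each statement's English description precedes it below -/
import Mathlib

section
/- Let n ≥ 2, let Γ₁, …, Γₙ be arbitrary groups and let S be a subgroup of Γ₁ × ⋯ × Γₙ. For each i let p_i : S → Γ_i be the restriction of the i-th coordinate projection, let K_i = ker(p_i), let N_{i,j} = p_j(K_i) (a subgroup of Γ_j), and let L_j = S ∩ Γ_j. Then for every j, the left-normed iterated commutator subgroup [N_{1,j}, N_{2,j}, …, N_{j−1,j}, N_{j+1,j}, …, N_{n,j}] (the (n−1)-fold commutator of the subgroups N_{i,j} over all i ≠ j, bracketed from the left) is contained in L_j. -/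
noncomputable section

universe u

/-- The left-normed iterated commutator `[[…[[H₁, H₂], H₃], …], H_m]` of a list of subgroups
(`⊥` for the empty list). -/
def leftNormedCommutator {G : Type u} [Group G] : List (Subgroup G) → Subgroup G
  | [] => ⊥
  | H :: t => t.foldl (fun A B => ⁅A, B⁆) H

private lemma foldl_comm_map {G G' : Type u} [Group G] [Group G'] (f : G →* G')
    (t : List (Subgroup G)) : ∀ A : Subgroup G,
    (t.map (Subgroup.map f)).foldl (fun X Y => ⁅X, Y⁆) (A.map f)
      = (t.foldl (fun X Y => ⁅X, Y⁆) A).map f := by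
  induction t with
  | nil => intro A; rfl
  | cons C t ih =>
      intro A
      simp only [List.map_cons, List.foldl_cons]
      rw [← Subgroup.map_commutator, ih]

private lemma leftNormedCommutator_map {G G' : Type u} [Group G] [Group G'] (f : G →* G')
    (L : List (Subgroup G)) :
    leftNormedCommutator (L.map (Subgroup.map f)) = (leftNormedCommutator L).map f := by
  cases L with
  | nil => simp [leftNormedCommutator]
  | cons A t => exact foldl_comm_map f t A

private lemma foldl_comm_le {G : Type u} [Group G] (t : List (Subgroup G)) :
    ∀ A : Subgroup G, A.Normal → (∀ C ∈ t, C.Normal) →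
    t.foldl (fun X Y => ⁅X, Y⁆) A ≤ A ∧ ∀ C ∈ t, t.foldl (fun X Y => ⁅X, Y⁆) A ≤ C := by
  induction t with
  | nil => intro A _ _; exact ⟨le_rfl, by simp⟩
  | cons C t ih =>
      intro A hA ht
      have hC : C.Normal := ht C (List.mem_cons_self)
      have hcomm : Subgroup.Normal ⁅A, C⁆ := @Subgroup.commutator_normal _ _ A C hA hC
      have ht' : ∀ D ∈ t, D.Normal := fun D hD => ht D (List.mem_cons_of_mem _ hD)
      obtain ⟨h1, h2⟩ := ih ⁅A, C⁆ hcomm ht'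
      simp only [List.foldl_cons]
      refine ⟨h1.trans (@Subgroup.commutator_le_left _ _ A C hA), ?_⟩
      intro D hD
      rcases List.mem_cons.mp hD with rfl | hD
      · exact h1.trans (@Subgroup.commutator_le_right _ _ A D hC)
      · exact h2 D hD

private lemma leftNormedCommutator_le_of_mem {G : Type u} [Group G] (L : List (Subgroup G))
    (hL : ∀ A ∈ L, A.Normal) (B : Subgroup G) (hB : B ∈ L) : leftNormedCommutator L ≤ B := by
  cases L with
  | nil => cases hB
  | cons A t =>
      have hA : A.Normal := hL A (List.mem_cons_self)
      have ht : ∀ C ∈ t, C.Normal := fun C hC => hL C (List.mem_cons_of_mem _ hC)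
      obtain ⟨h1, h2⟩ := foldl_comm_le t A hA ht
      rcases List.mem_cons.mp hB with rfl | hB
      · exact h1
      · exact h2 B hB

/-- **Lemma 5.1.** Let `Γ₁, …, Γₙ` (`n ≥ 2`) be arbitrary groups, `S ⊆ Γ₁ × ⋯ × Γₙ` a
subgroup, `p_i : S → Γ_i` the coordinate projections, `K_i = ker p_i`, `N_{i,j} = p_j(K_i)`
and `L_j = S ∩ Γ_j`.  Then the left-normed commutator
`[N_{1,j}, …, N_{j-1,j}, N_{j+1,j}, …, N_{n,j}]` is contained in `L_j`. -/
theorem leftNormedCommutator_of_projected_kernels_le_intersection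
    (n : ℕ) (hn : 2 ≤ n) (Γ : Fin n → Type u) [∀ i, Group (Γ i)]
    (S : Subgroup (∀ i, Γ i))
    (p : ∀ i : Fin n, ↥S →* Γ i)
    (hp : ∀ i, p i = (Pi.evalMonoidHom Γ i).comp S.subtype)
    (j : Fin n) :
    leftNormedCommutator
        (((List.finRange n).filter (fun i => decide (i ≠ j))).map
          (fun i => (MonoidHom.ker (p i)).map (p j)))
      ≤ S.comap (MonoidHom.mulSingle Γ j) := by
  set l := (List.finRange n).filter (fun i => decide (i ≠ j)) with hl
  have hmap : l.map (fun i => (MonoidHom.ker (p i)).map (p j))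
      = (l.map (fun i => MonoidHom.ker (p i))).map (Subgroup.map (p j)) := by
    rw [List.map_map]; rfl
  rw [hmap, leftNormedCommutator_map]
  rintro x ⟨s, hs, rfl⟩
  -- s lies in every kernel ker (p i) for i ≠ j
  have hker : ∀ i : Fin n, i ≠ j → p i s = 1 := by
    intro i hi
    have hi_mem : i ∈ l := by
      rw [hl, List.mem_filter]
      exact ⟨List.mem_finRange i, by simpa using hi⟩
    have hmem : MonoidHom.ker (p i) ∈ l.map (fun i => MonoidHom.ker (p i)) :=
      List.mem_map_of_mem hi_mem
    have hnorm : ∀ A ∈ l.map (fun i => MonoidHom.ker (p i)), A.Normal := by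
      intro A hA
      obtain ⟨k, _, rfl⟩ := List.mem_map.mp hA
      exact MonoidHom.normal_ker (p k)
    exact leftNormedCommutator_le_of_mem _ hnorm _ hmem hs
  -- hence s is supported at j only
  have hsupp : ∀ i : Fin n, i ≠ j → (s : ∀ i, Γ i) i = 1 := by
    intro i hi
    have := hker i hi
    rw [hp i] at this
    exact this
  have hval : MonoidHom.mulSingle Γ j (p j s) = (s : ∀ i, Γ i) := by
    rw [hp j]
    funext i
    by_cases h : i = j
    · subst h; simp
    · rw [hsupp i h]
      simp [h]
  show MonoidHom.mulSingle Γ j (p j s) ∈ S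
  rw [hval]
  exact s.2
end
end

section
/- Let G be a finitely generated virtually nilpotent group and let S be a subgroup of G. Then there exist an integer r ≥ 0 and a chain of subgroups S₀ ≤ S₁ ≤ ⋯ ≤ S_r = G such that S₀ has finite index in S, S_i is normal in S_{i+1} for each i < r, and each quotient group S_{i+1}/S_i is either finite or cyclic. -/
noncomputable section

universe u

namespace VNChainAux

open Pointwise
open Subgroup hiding lowerCentralSeries lowerCentralSeries_zero lowerCentralSeries_succ lowerCentralSeries_antitone nilpotent_iff_lowerCentralSeries
open scoped commutatorElement

/-- The lower central series of a group (old API). -/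
abbrev lowerCentralSeries (H : Type*) [Group H] (n : ℕ) : Subgroup H :=
  (⊤ : Subgroup H).lowerCentralSeries n

theorem lowerCentralSeries_zero {H : Type*} [Group H] : lowerCentralSeries H 0 = ⊤ := rfl

theorem lowerCentralSeries_succ {H : Type*} [Group H] (n : ℕ) :
    lowerCentralSeries H (n + 1) = ⁅lowerCentralSeries H n, ⊤⁆ :=
  Subgroup.lowerCentralSeries_succ _ n

theorem lowerCentralSeries_antitone {H : Type*} [Group H] :
    Antitone (lowerCentralSeries H) :=
  Subgroup.lowerCentralSeries_antitone _

theorem nilpotent_iff_lowerCentralSeries {H : Type*} [Group H] :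
    Group.IsNilpotent H ↔ ∃ n, lowerCentralSeries H n = ⊥ :=
  Subgroup.nilpotent_iff_lowerCentralSeries

variable {G : Type u} [Group G]

/-- One step of a subnormal chain: `K` is normal in `L` with finite or cyclic quotient. -/
def Step (K L : Subgroup G) : Prop :=
  K ≤ L ∧ ∃ (Q : Type u) (_ : Group Q) (f : ↥L →* Q),
    Function.Surjective f ∧ MonoidHom.ker f = K.subgroupOf L ∧ (Finite Q ∨ IsCyclic Q)

theorem Step.le {K L : Subgroup G} (h : Step K L) : K ≤ L := h.1

/-- `Reaches K L` : there is a chain of `Step`s from `K` up to `L`. -/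
def Reaches : Subgroup G → Subgroup G → Prop := Relation.ReflTransGen Step

theorem step_of_normal {K L : Subgroup G} (hKL : K ≤ L) [hn : (K.subgroupOf L).Normal]
    (h : Finite (↥L ⧸ K.subgroupOf L) ∨ IsCyclic (↥L ⧸ K.subgroupOf L)) : Step K L := ⟨hKL, ↥L ⧸ K.subgroupOf L, inferInstance, QuotientGroup.mk' _,
    QuotientGroup.mk'_surjective _, QuotientGroup.ker_mk' _, h⟩

/-- The step from a normal finite-index subgroup to the whole group. -/
theorem step_top (N : Subgroup G) [N.Normal] [N.FiniteIndex] : Step N (⊤ : Subgroup G) := by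
  refine step_of_normal le_top (Or.inl ?_)
  exact Subgroup.finite_quotient_of_finiteIndex

/-- The cyclic step obtained by adjoining one normalizing element. -/
theorem step_cyclic (K : Subgroup G) (z : G) (hz : z ∈ normalizer (K : Set G)) :
    Step K (K ⊔ zpowers z) := by
  set L := K ⊔ zpowers z with hL
  have hKL : K ≤ L := le_sup_left
  have hzL : z ∈ L := Subgroup.mem_sup_right (mem_zpowers z)
  have hLn : L ≤ normalizer (K : Set G) := sup_le le_normalizer (zpowers_le.mpr hz)
  have hn : (K.subgroupOf L).Normal := by
    constructor
    rintro ⟨n, hnL⟩ hmem ⟨g, hgL⟩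
    have hg := mem_normalizer_iff.mp (hLn hgL)
    exact (mem_subgroupOf).mpr ((hg n).mp (mem_subgroupOf.mp hmem))
  letI := hn
  refine step_of_normal hKL (Or.inr ?_)
  -- the quotient is generated by the image of z
  set f := QuotientGroup.mk' (K.subgroupOf L)
  have htop : (K.subgroupOf L) ⊔ zpowers (⟨z, hzL⟩ : ↥L) = ⊤ := by
    apply Subgroup.map_injective L.subtype_injective
    rw [Subgroup.map_sup, subgroupOf_map_subtype, ← MonoidHom.range_eq_map, range_subtype,
      inf_of_le_left hKL]
    simp only [MonoidHom.map_zpowers]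
    rfl
  have hzpow : zpowers (f ⟨z, hzL⟩) = ⊤ := by
    have h1 : Subgroup.map f ⊤ = ⊤ :=
      Subgroup.map_top_of_surjective f (QuotientGroup.mk'_surjective _)
    rw [← h1, ← htop, Subgroup.map_sup]
    have h2 : Subgroup.map f (K.subgroupOf L) = ⊥ :=
      (Subgroup.map_eq_bot_iff _).mpr (le_of_eq (QuotientGroup.ker_mk' _).symm)
    rw [h2, bot_sup_eq, MonoidHom.map_zpowers]
  exact ⟨⟨f ⟨z, hzL⟩, fun x => by
    have h := Subgroup.mem_top x
    rwa [← hzpow] at h⟩⟩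

/-- Adjoining a finite set of elements whose commutators with everything relevant
lie in `K` yields a chain of cyclic steps. -/
theorem reaches_sup_closure (K : Subgroup G) (T : Finset G)
    (h : ∀ z ∈ T, ∀ x ∈ K ⊔ closure (T : Set G), ⁅z, x⁆ ∈ K ∧ ⁅z⁻¹, x⁆ ∈ K) :
    Reaches K (K ⊔ closure (T : Set G)) := by
  classical
  suffices H : ∀ T' : Finset G, T' ⊆ T → Reaches K (K ⊔ closure (T' : Set G)) from H T le_rfl
  intro T' hT'
  induction T' using Finset.induction_on with
  | empty =>
    rw [Finset.coe_empty, Subgroup.closure_empty, sup_bot_eq]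
    exact Relation.ReflTransGen.refl
  | @insert a s ha ih =>
    have hsub : s ⊆ T := fun x hx => hT' (Finset.mem_insert_of_mem hx)
    have haT : a ∈ T := hT' (Finset.mem_insert_self a s)
    set M := K ⊔ closure (s : Set G) with hM
    have hMle : M ≤ K ⊔ closure (T : Set G) :=
      sup_le_sup_left (Subgroup.closure_mono (by exact_mod_cast hsub)) K
    have hnorm : a ∈ normalizer (M : Set G) := by
      rw [mem_normalizer_iff]
      intro x
      constructor
      · intro hx
        have hc : ⁅a, x⁆ ∈ K := (h a haT x (hMle hx)).1
        have : a * x * a⁻¹ = ⁅a, x⁆ * x := by group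
        rw [this]
        exact mul_mem (Subgroup.mem_sup_left hc : ⁅a, x⁆ ∈ M) hx
      · intro hx
        have hc : ⁅a⁻¹, a * x * a⁻¹⁆ ∈ K := (h a haT _ (hMle hx)).2
        have : x = ⁅a⁻¹, a * x * a⁻¹⁆ * (a * x * a⁻¹) := by group
        rw [this]
        exact mul_mem (Subgroup.mem_sup_left hc : _ ∈ M) hx
    have hstep : Step M (M ⊔ zpowers a) := step_cyclic M a hnorm
    have heq : M ⊔ zpowers a = K ⊔ closure ((insert a s : Finset G) : Set G) := by
      rw [Finset.coe_insert, Set.insert_eq, Subgroup.closure_union, zpowers_eq_closure, hM,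
        sup_assoc, sup_comm (closure (s : Set G))]
    exact Relation.ReflTransGen.tail (ih hsub) (heq ▸ hstep)

/-- In a finitely generated group, each term of the lower central series is
finitely generated modulo the next term. -/
theorem exists_finset_lcs (H : Type*) [Group H] (X : Finset H)
    (hX : closure (X : Set H) = ⊤) (i : ℕ) :
    ∃ T : Finset H, (T : Set H) ⊆ (lowerCentralSeries H i : Set H) ∧
      lowerCentralSeries H i = lowerCentralSeries H (i + 1) ⊔ closure (T : Set H) := by
  classical
  induction i with
  | zero =>
    refine ⟨X, by simp [lowerCentralSeries_zero], ?_⟩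
    rw [lowerCentralSeries_zero, hX, sup_top_eq]
  | succ i ih =>
    obtain ⟨T, hT1, hT2⟩ := ih
    refine ⟨(T ×ˢ X).image fun p => ⁅p.1, p.2⁆, ?_, ?_⟩
    case _ =>
      intro w hw
      simp only [Finset.coe_image, Set.mem_image, Finset.mem_coe, Finset.mem_product] at hw
      obtain ⟨⟨b, x⟩, ⟨hb, hx⟩, rfl⟩ := hw
      rw [SetLike.mem_coe, lowerCentralSeries_succ]
      exact commutator_mem_commutator (hT1 hb) (mem_top x)
    case _ =>
      set T' : Finset H := (T ×ˢ X).image fun p => ⁅p.1, p.2⁆ with hT'def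
      have hT'sub : (T' : Set H) ⊆ (lowerCentralSeries H (i + 1) : Set H) := by
        intro w hw
        simp only [hT'def, Finset.coe_image, Set.mem_image, Finset.mem_coe,
          Finset.mem_product] at hw
        obtain ⟨⟨b, x⟩, ⟨hb, hx⟩, rfl⟩ := hw
        rw [SetLike.mem_coe, lowerCentralSeries_succ]
        exact commutator_mem_commutator (hT1 hb) (mem_top x)
      refine le_antisymm ?_ (sup_le (lowerCentralSeries_antitone (Nat.le_succ _))
        ((closure_le _).mpr hT'sub))
      -- the hard inclusion
      set π := QuotientGroup.mk' (lowerCentralSeries H (i + 1 + 1))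
      set C := closure ((π : H →* H ⧸ lowerCentralSeries H (i + 1 + 1)) '' (T' : Set H)) with hCdef
      have hker : ∀ w ∈ lowerCentralSeries H (i + 1 + 1), π w = 1 := by
        intro w hw
        exact (QuotientGroup.eq_one_iff w).mpr hw
      have hcen : ∀ w ∈ lowerCentralSeries H (i + 1),
          ∀ v : H ⧸ lowerCentralSeries H (i + 1 + 1), Commute (π w) v := by
        intro w hw v
        obtain ⟨b, rfl⟩ := QuotientGroup.mk'_surjective _ v
        rw [← commutatorElement_eq_one_iff_commute, ← map_commutatorElement]
        exact hker _ (by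
          rw [lowerCentralSeries_succ]
          exact commutator_mem_commutator hw (mem_top b))
      have hmemT' : ∀ b ∈ T, ∀ x ∈ X, ⁅(b : H), (x : H)⁆ ∈ T' := by
        intro b hb x hx
        simp only [hT'def, Finset.mem_image, Finset.mem_product]
        exact ⟨(b, x), ⟨hb, hx⟩, rfl⟩
      -- Claim 1: commutators of generators of T with arbitrary elements land in C
      have claim1 : ∀ b ∈ T, ∀ g : H, π ⁅b, g⁆ ∈ C := by
        intro b hb g
        have hg : g ∈ closure (X : Set H) := hX ▸ mem_top g
        induction hg using closure_induction with
        | mem x hx =>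
          exact subset_closure ⟨⁅b, x⁆, hmemT' b hb x hx, rfl⟩
        | one =>
          simp only [commutatorElement_def, mul_one, one_mul, inv_one, mul_inv_cancel,
            mul_inv_cancel_left]
          exact (map_one π).symm ▸ one_mem C
        | mul x y hx hy px py =>
          have hid : ⁅b, x * y⁆ = ⁅b, x⁆ * (x * ⁅b, y⁆ * x⁻¹) := by
            simp only [commutatorElement_def]; group
          have hby : ⁅b, y⁆ ∈ lowerCentralSeries H (i + 1) := by
            rw [lowerCentralSeries_succ]
            exact commutator_mem_commutator (hT1 hb) (mem_top y)
          have hconj : π x * π ⁅b, y⁆ * (π x)⁻¹ = π ⁅b, y⁆ := by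
            rw [← (hcen _ hby (π x)).eq, mul_inv_cancel_right]
          rw [hid, map_mul, map_mul, map_mul, map_inv, hconj]
          exact mul_mem px py
        | inv x hx px =>
          have hid : ⁅b, x⁻¹⁆ = x⁻¹ * ⁅b, x⁆⁻¹ * x := by
            simp only [commutatorElement_def]; group
          have hbx : ⁅b, x⁆ ∈ lowerCentralSeries H (i + 1) := by
            rw [lowerCentralSeries_succ]
            exact commutator_mem_commutator (hT1 hb) (mem_top x)
          have hconj : (π x)⁻¹ * (π ⁅b, x⁆)⁻¹ * π x = (π ⁅b, x⁆)⁻¹ := by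
            have h := ((hcen _ hbx (π x)).inv_left).eq
            rw [mul_assoc, h, ← mul_assoc, inv_mul_cancel, one_mul]
          rw [hid, map_mul, map_mul, map_inv, map_inv, hconj]
          exact inv_mem px
      -- Claim 2: commutators of elements of closure T with arbitrary elements land in C
      have claim2 : ∀ t ∈ closure (T : Set H),
          t ∈ lowerCentralSeries H i ∧ ∀ g : H, π ⁅t, g⁆ ∈ C := by
        intro t ht
        induction ht using closure_induction with
        | mem x hx => exact ⟨hT1 hx, claim1 x hx⟩
        | one =>
          refine ⟨one_mem _, fun g => ?_⟩
          have : ⁅(1 : H), g⁆ = 1 := by simp [commutatorElement_def]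
          rw [this, map_one]; exact one_mem C
        | mul x y hx hy px py =>
          refine ⟨mul_mem px.1 py.1, fun g => ?_⟩
          have hid : ⁅x * y, g⁆ = (x * ⁅y, g⁆ * x⁻¹) * ⁅x, g⁆ := by
            simp only [commutatorElement_def]; group
          have hyg : ⁅y, g⁆ ∈ lowerCentralSeries H (i + 1) := by
            rw [lowerCentralSeries_succ]
            exact commutator_mem_commutator py.1 (mem_top g)
          have hconj : π x * π ⁅y, g⁆ * (π x)⁻¹ = π ⁅y, g⁆ := by
            rw [← (hcen _ hyg (π x)).eq, mul_inv_cancel_right]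
          rw [hid, map_mul, map_mul, map_mul, map_inv, hconj]
          exact mul_mem (py.2 g) (px.2 g)
        | inv x hx px =>
          refine ⟨inv_mem px.1, fun g => ?_⟩
          have hid : ⁅x⁻¹, g⁆ = x⁻¹ * ⁅x, g⁆⁻¹ * x := by
            simp only [commutatorElement_def]; group
          have hxg : ⁅x, g⁆ ∈ lowerCentralSeries H (i + 1) := by
            rw [lowerCentralSeries_succ]
            exact commutator_mem_commutator px.1 (mem_top g)
          have hconj : (π x)⁻¹ * (π ⁅x, g⁆)⁻¹ * π x = (π ⁅x, g⁆)⁻¹ := by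
            have h := ((hcen _ hxg (π x)).inv_left).eq
            rw [mul_assoc, h, ← mul_assoc, inv_mul_cancel, one_mul]
          rw [hid, map_mul, map_mul, map_inv, map_inv, hconj]
          exact inv_mem (px.2 g)
      -- Main inclusion
      rw [lowerCentralSeries_succ, Subgroup.commutator_def, Subgroup.closure_le]
      rintro w ⟨a, ha, g, -, rfl⟩
      rw [SetLike.mem_coe]
      show ⁅a, g⁆ ∈ _
      rw [hT2] at ha
      have hdecomp : a ∈ ((lowerCentralSeries H (i + 1) : Subgroup H) : Set H) *
          (closure (T : Set H) : Set H) := by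
        rw [← Subgroup.normal_mul]
        exact ha
      obtain ⟨n, hn, t, ht, rfl⟩ := hdecomp
      have hng : π ⁅n, g⁆ = 1 := hker _ (by
        rw [lowerCentralSeries_succ]
        exact commutator_mem_commutator hn (mem_top g))
      have htg : ⁅t, g⁆ ∈ lowerCentralSeries H (i + 1) := by
        rw [lowerCentralSeries_succ]
        exact commutator_mem_commutator (claim2 t ht).1 (mem_top g)
      have hid : ⁅n * t, g⁆ = (n * ⁅t, g⁆ * n⁻¹) * ⁅n, g⁆ := by
        simp only [commutatorElement_def]; group
      have hconj : π n * π ⁅t, g⁆ * (π n)⁻¹ = π ⁅t, g⁆ := by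
        rw [← (hcen _ htg (π n)).eq, mul_inv_cancel_right]
      have hπ : π ⁅n * t, g⁆ ∈ C := by
        rw [hid, map_mul, map_mul, map_mul, map_inv, hconj, hng, mul_one]
        exact (claim2 t ht).2 g
      -- pull back along π
      have hCmap : C = Subgroup.map (π : H →* _) (closure (T' : Set H)) := by
        rw [hCdef, MonoidHom.map_closure]
      rw [hCmap] at hπ
      have : ⁅n * t, g⁆ ∈ Subgroup.comap (π : H →* _)
          (Subgroup.map (π : H →* _) (closure (T' : Set H))) := hπ
      rw [Subgroup.comap_map_eq, QuotientGroup.ker_mk'] at this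
      rwa [sup_comm]

/-- Any subgroup of a finitely generated nilpotent subgroup `N` of `G` reaches `N`
by a chain of cyclic steps. -/
theorem reaches_of_le_nilpotent (N : Subgroup G) (hnil : Group.IsNilpotent ↥N)
    (hfgN : Group.FG ↥N) (H : Subgroup G) (hH : H ≤ N) : Reaches H N := by
  classical
  obtain ⟨X, hX⟩ := (Group.fg_def.mp hfgN)
  obtain ⟨n, hn⟩ := nilpotent_iff_lowerCentralSeries.mp hnil
  set D : ℕ → Subgroup G := fun i => Subgroup.map N.subtype (lowerCentralSeries ↥N i) with hD
  have hD0 : D 0 = N := by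
    rw [hD]
    simp only [lowerCentralSeries_zero]
    rw [← MonoidHom.range_eq_map, range_subtype]
  have hDle : ∀ i, D i ≤ N := fun i => by
    rw [hD]
    exact (Subgroup.map_le_range _ _).trans_eq (range_subtype N)
  have hDsucc : ∀ i, D (i + 1) ≤ D i := fun i =>
    Subgroup.map_mono (lowerCentralSeries_antitone (Nat.le_succ i))
  have hstep : ∀ i, Reaches (H ⊔ D (i + 1)) (H ⊔ D i) := by
    intro i
    obtain ⟨T, hT1, hT2⟩ := exists_finset_lcs ↥N X hX i
    set T' : Finset G := T.image N.subtype with hT'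
    have hclos : closure (T' : Set G) = Subgroup.map N.subtype (closure (T : Set ↥N)) := by
      rw [MonoidHom.map_closure, hT', Finset.coe_image]
    have hDi : D i = D (i + 1) ⊔ Subgroup.map N.subtype (closure (T : Set ↥N)) := by
      rw [hD]
      simp only
      rw [hT2, Subgroup.map_sup]
    have hsup : (H ⊔ D (i + 1)) ⊔ closure (T' : Set G) = H ⊔ D i := by
      rw [hclos, hDi, sup_assoc]
    have hcomm : ∀ z ∈ T', ∀ x ∈ (H ⊔ D (i + 1)) ⊔ closure (T' : Set G),
        ⁅z, x⁆ ∈ H ⊔ D (i + 1) ∧ ⁅z⁻¹, x⁆ ∈ H ⊔ D (i + 1) := by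
      intro z hz x hx
      rw [hT', Finset.mem_image] at hz
      obtain ⟨z₀, hz₀, rfl⟩ := hz
      rw [hsup] at hx
      have hxN : x ∈ N := (sup_le hH (hDle i)) hx
      set x₀ : ↥N := ⟨x, hxN⟩ with hx₀
      have hx0 : x = N.subtype x₀ := rfl
      have key : ∀ w : ↥N, w ∈ lowerCentralSeries ↥N i →
          ⁅N.subtype w, x⁆ ∈ H ⊔ D (i + 1) := by
        intro w hw
        have : ⁅N.subtype w, x⁆ = N.subtype ⁅w, x₀⁆ := by
          rw [map_commutatorElement]
          rfl
        rw [this]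
        refine Subgroup.mem_sup_right ?_
        refine Subgroup.mem_map_of_mem _ ?_
        rw [lowerCentralSeries_succ]
        exact commutator_mem_commutator hw (mem_top x₀)
      constructor
      · exact key z₀ (hT1 hz₀)
      · have : (N.subtype z₀)⁻¹ = N.subtype z₀⁻¹ := by rw [map_inv]
        rw [this]
        exact key z₀⁻¹ (inv_mem (hT1 hz₀))
    have := reaches_sup_closure (H ⊔ D (i + 1)) T' hcomm
    rwa [hsup] at this
  have hmain : ∀ i, Reaches (H ⊔ D i) N := by
    intro i
    induction i with
    | zero =>
      rw [hD0, sup_of_le_right hH]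
      exact Relation.ReflTransGen.refl
    | succ i ih => exact Relation.ReflTransGen.trans (hstep i) ih
  have := hmain n
  have hDn : D n = ⊥ := by
    rw [hD]; simp only [hn, Subgroup.map_bot]
  rwa [hDn, sup_bot_eq] at this

/-- Convert a `Reaches` certificate into an explicit monotone chain. -/
theorem exists_chain_of_reaches {A B : Subgroup G} (h : Reaches A B) :
    ∃ (r : ℕ) (c : Fin (r + 1) → Subgroup G), Monotone c ∧ c 0 = A ∧
      c (Fin.last r) = B ∧ ∀ i : Fin r, Step (c i.castSucc) (c i.succ) := by
  induction h using Relation.ReflTransGen.head_induction_on with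
  | refl => exact ⟨0, fun _ => B, monotone_const, rfl, rfl, fun i => i.elim0⟩
  | @head A A' hstep _ ih =>
    obtain ⟨r, c, hmono, h0, hlast, hsteps⟩ := ih
    have hstep0 : Step A (c 0) := h0 ▸ hstep
    refine ⟨r + 1, Fin.cases A c, ?_, ?_, ?_, ?_⟩
    case _ =>
      rw [Fin.monotone_iff_le_succ]
      intro i
      induction i using Fin.cases with
      | zero =>
        simp only [Fin.castSucc_zero, Fin.cases_zero, Fin.cases_succ]
        exact hstep0.le
      | succ j =>
        simp only [← Fin.succ_castSucc, Fin.cases_succ]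
        exact hmono (Fin.castSucc_le_succ j)
    case _ => simp only [Fin.cases_zero]
    case _ =>
      simp only [← Fin.succ_last, Fin.cases_succ]
      exact hlast
    case _ =>
      intro i
      induction i using Fin.cases with
      | zero =>
        simp only [Fin.castSucc_zero, Fin.cases_zero, Fin.cases_succ]
        exact hstep0
      | succ j =>
        simp only [← Fin.succ_castSucc, Fin.cases_succ]
        exact hsteps j

end VNChainAux

/-- **Corollary 8.2.** Let `G` be a finitely generated virtually nilpotent group and `S` a
subgroup.  Then there is a subnormal chain `S₀ ≤ S₁ ≤ ⋯ ≤ S_r = G` with `S₀` of finite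
index in `S`, each `Sᵢ` normal in `S_{i+1}`, and each quotient `S_{i+1}/Sᵢ` finite or
cyclic. -/
theorem fg_virtually_nilpotent_subnormal_chain
    (G : Type u) [Group G] (hfg : Group.FG G)
    (hvn : ∃ H : Subgroup G, H.FiniteIndex ∧ Group.IsNilpotent ↥H)
    (S : Subgroup G) :
    ∃ (r : ℕ) (c : Fin (r + 1) → Subgroup G), Monotone c ∧
      c (Fin.last r) = ⊤ ∧ c 0 ≤ S ∧ ((c 0).subgroupOf S).FiniteIndex ∧
      ∀ i : Fin r, ∃ (Q : Type u) (_ : Group Q) (f : ↥(c i.succ) →* Q),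
        Function.Surjective f ∧
        MonoidHom.ker f = (c i.castSucc).subgroupOf (c i.succ) ∧
        (Finite Q ∨ IsCyclic Q) := by
  haveI := hfg
  obtain ⟨H₀, hfi, hnil⟩ := hvn
  haveI := hfi
  set N := H₀.normalCore with hN
  haveI : N.Normal := Subgroup.normalCore_normal H₀
  haveI : N.FiniteIndex := Subgroup.finiteIndex_normalCore H₀
  haveI : Group.IsNilpotent ↥H₀ := hnil
  have hnilN : Group.IsNilpotent ↥N := by
    have hle : N ≤ H₀ := Subgroup.normalCore_le H₀
    exact nilpotent_of_mulEquiv (Subgroup.subgroupOfEquivOfLe hle)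
  haveI : Group.FG ↥N := Subgroup.fg_of_index_ne_zero N
  have hreach : VNChainAux.Reaches (S ⊓ N) (⊤ : Subgroup G) :=
    Relation.ReflTransGen.tail
      (VNChainAux.reaches_of_le_nilpotent N hnilN inferInstance (S ⊓ N) inf_le_right)
      (VNChainAux.step_top N)
  obtain ⟨r, c, hmono, h0, hlast, hsteps⟩ := VNChainAux.exists_chain_of_reaches hreach
  refine ⟨r, c, hmono, hlast, ?_, ?_, fun i => (hsteps i).2⟩
  · rw [h0]; exact inf_le_left
  · rw [h0, inf_comm, Subgroup.inf_subgroupOf_right]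
    infer_instance
end
end

section
/- Let Γ be a limit group containing a nontrivial abelian normal subgroup. Then Γ is abelian. -/
noncomputable section

universe u

namespace LimitGroupAux

open Subgroup
open scoped commutatorElement

variable {G : Type*} [Group G]

theorem comm_closure {s : Set G} (h : ∀ a ∈ s, ∀ b ∈ s, Commute a b) :
    ∀ a ∈ closure s, ∀ b ∈ closure s, Commute a b := by
  intro a ha b hb
  induction ha, hb using closure_induction₂ with
  | mem x y hx hy => exact h x hx y hy
  | one_left x hx => exact Commute.one_left x
  | one_right x hx => exact Commute.one_right x
  | mul_left x y z _ _ _ h1 h2 => exact h1.mul_left h2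
  | mul_right y z x _ _ _ h1 h2 => exact h1.mul_right h2
  | inv_left x y _ _ h1 => exact h1.inv_left
  | inv_right x y _ _ h1 => exact h1.inv_right

theorem subgroup_commute {K : Subgroup G} (h : ∀ a ∈ K, ∀ b ∈ K, Commute a b) :
    ∀ c d : K, Commute c d := fun c d =>
  Subtype.ext (h c.1 c.2 d.1 d.2)

theorem closure_range_of_eq_top (G : Type*) [Group G] [IsFreeGroup G] :
    Subgroup.closure (Set.range (IsFreeGroup.of : IsFreeGroup.Generators G → G)) = ⊤ := by
  have h : Set.range (IsFreeGroup.of : IsFreeGroup.Generators G → G)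
      = (IsFreeGroup.mulEquiv G).toMonoidHom '' Set.range (FreeGroup.of) := by
    rw [← Set.range_comp]
    rfl
  rw [h, ← MonoidHom.map_closure, FreeGroup.closure_range_of]
  rw [← MonoidHom.range_eq_map]
  exact MonoidHom.range_eq_top.mpr (IsFreeGroup.mulEquiv G).surjective

theorem exists_gen_of_no_two (G : Type*) [Group G] [IsFreeGroup G]
    (h : ∀ p q : IsFreeGroup.Generators G, p = q) :
    ∃ g₀ : G, ∀ g : G, ∃ t : ℤ, g₀ ^ t = g := by
  rcases isEmpty_or_nonempty (IsFreeGroup.Generators G) with he | hne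
  · refine ⟨1, fun g => ⟨0, ?_⟩⟩
    have hg : g ∈ Subgroup.closure
        (Set.range (IsFreeGroup.of : IsFreeGroup.Generators G → G)) := by
      rw [closure_range_of_eq_top]; trivial
    rw [Set.range_eq_empty, Subgroup.closure_empty, Subgroup.mem_bot] at hg
    rw [hg]; simp
  · obtain ⟨p⟩ := hne
    refine ⟨IsFreeGroup.of p, fun g => ?_⟩
    have hg : g ∈ Subgroup.closure
        (Set.range (IsFreeGroup.of : IsFreeGroup.Generators G → G)) := by
      rw [closure_range_of_eq_top]; trivial
    have hr : Set.range (IsFreeGroup.of : IsFreeGroup.Generators G → G)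
        = {IsFreeGroup.of p} := by
      apply Set.eq_singleton_iff_unique_mem.mpr
      exact ⟨⟨p, rfl⟩, by rintro _ ⟨q, rfl⟩; rw [h q p]⟩
    rw [hr, ← Subgroup.zpowers_eq_closure] at hg
    exact Subgroup.mem_zpowers_iff.mp hg

theorem exists_gen_of_abelian (G : Type*) [Group G] [IsFreeGroup G]
    (hcomm : ∀ a b : G, Commute a b) :
    ∃ g₀ : G, ∀ g : G, ∃ t : ℤ, g₀ ^ t = g := by
  classical
  by_cases h2 : ∀ p q : IsFreeGroup.Generators G, p = q
  · exact exists_gen_of_no_two G h2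
  · push_neg at h2
    obtain ⟨p, q, hpq⟩ := h2
    exfalso
    have hτσ : ¬ Commute (Equiv.swap (0 : Fin 5) 1) (finRotate 5) := by
      show ¬ (_ * _ = _ * _); decide
    have hmap := (hcomm (IsFreeGroup.of p) (IsFreeGroup.of q)).map
      (IsFreeGroup.lift (fun w => if w = p then (Equiv.swap (0 : Fin 5) 1)
        else if w = q then finRotate 5 else 1))
    rw [IsFreeGroup.lift_of, IsFreeGroup.lift_of, if_pos rfl, if_neg (Ne.symm hpq),
      if_pos rfl] at hmap
    exact hτσ hmap

/-- In a free group, if `r ^ k = s ^ l` with `k, l ≠ 0` and `r, s` generate, then `r` and `s`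
commute. -/
theorem commute_of_common_power {G : Type*} [Group G] [IsFreeGroup G]
    {r s : G} {k l : ℤ} (hk : k ≠ 0) (hl : l ≠ 0) (hrs : r ^ k = s ^ l)
    (hgen : closure ({r, s} : Set G) = ⊤) : Commute r s := by
  classical
  by_cases h2 : ∀ p q : IsFreeGroup.Generators G, p = q
  · obtain ⟨g₀, hg⟩ := exists_gen_of_no_two G h2
    obtain ⟨i, hi⟩ := hg r
    obtain ⟨j, hj⟩ := hg s
    rw [← hi, ← hj]
    exact (Commute.refl g₀).zpow_zpow i j
  · exfalso
    push_neg at h2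
    obtain ⟨p, q, hpq⟩ := h2
    set χp : G →* Multiplicative ℤ := IsFreeGroup.lift
      (fun w : IsFreeGroup.Generators G =>
        if w = p then Multiplicative.ofAdd (1 : ℤ) else 1) with hχp
    set χq : G →* Multiplicative ℤ := IsFreeGroup.lift
      (fun w : IsFreeGroup.Generators G =>
        if w = q then Multiplicative.ofAdd (1 : ℤ) else 1) with hχq
    set r1 := Multiplicative.toAdd (χp r) with hr1
    set r2 := Multiplicative.toAdd (χq r) with hr2
    set s1 := Multiplicative.toAdd (χp s) with hs1
    set s2 := Multiplicative.toAdd (χq s) with hs2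
    have e1 : k * r1 = l * s1 := by
      have h : χp r ^ k = χp s ^ l := by rw [← map_zpow, ← map_zpow, hrs]
      have h' := congrArg Multiplicative.toAdd h
      rw [toAdd_zpow, toAdd_zpow] at h'
      simpa [smul_eq_mul] using h'
    have e2 : k * r2 = l * s2 := by
      have h : χq r ^ k = χq s ^ l := by rw [← map_zpow, ← map_zpow, hrs]
      have h' := congrArg Multiplicative.toAdd h
      rw [toAdd_zpow, toAdd_zpow] at h'
      simpa [smul_eq_mul] using h'
    have key : ∀ g : G, ∃ a b : ℤ,
        Multiplicative.toAdd (χp g) = a * r1 + b * s1 ∧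
        Multiplicative.toAdd (χq g) = a * r2 + b * s2 := by
      intro g
      have hg : g ∈ closure ({r, s} : Set G) := by rw [hgen]; trivial
      induction hg using closure_induction with
      | mem x hx =>
        rcases hx with rfl | rfl
        · exact ⟨1, 0, by rw [← hr1]; ring, by rw [← hr2]; ring⟩
        · exact ⟨0, 1, by rw [← hs1]; ring, by rw [← hs2]; ring⟩
      | one => exact ⟨0, 0, by simp, by simp⟩
      | mul x y hx hy ihx ihy =>
        obtain ⟨a, b, h1, h2⟩ := ihx
        obtain ⟨c, d, h3, h4⟩ := ihy
        exact ⟨a + c, b + d, by rw [map_mul, toAdd_mul, h1, h3]; ring,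
          by rw [map_mul, toAdd_mul, h2, h4]; ring⟩
      | inv x hx ihx =>
        obtain ⟨a, b, h1, h2⟩ := ihx
        exact ⟨-a, -b, by rw [map_inv, toAdd_inv, h1]; ring,
          by rw [map_inv, toAdd_inv, h2]; ring⟩
    obtain ⟨a, b, ha1, ha2⟩ := key (IsFreeGroup.of p)
    obtain ⟨c, d, hc1, hc2⟩ := key (IsFreeGroup.of q)
    have hp1 : Multiplicative.toAdd (χp (IsFreeGroup.of p)) = 1 := by
      rw [hχp, IsFreeGroup.lift_of, if_pos rfl]; rfl
    have hp2 : Multiplicative.toAdd (χq (IsFreeGroup.of p)) = 0 := by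
      rw [hχq, IsFreeGroup.lift_of, if_neg hpq]; rfl
    have hq1 : Multiplicative.toAdd (χp (IsFreeGroup.of q)) = 0 := by
      rw [hχp, IsFreeGroup.lift_of, if_neg (Ne.symm hpq)]; rfl
    have hq2 : Multiplicative.toAdd (χq (IsFreeGroup.of q)) = 1 := by
      rw [hχq, IsFreeGroup.lift_of, if_pos rfl]; rfl
    rw [hp1] at ha1; rw [hp2] at ha2; rw [hq1] at hc1; rw [hq2] at hc2
    have hα1 : (a * l + b * k) * r1 = l := by linear_combination l * ha1.symm + b * e1
    have hα2 : (a * l + b * k) * r2 = 0 := by linear_combination l * ha2.symm + b * e2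
    have hβ1 : (c * l + d * k) * r1 = 0 := by linear_combination l * hc1.symm + d * e1
    have hβ2 : (c * l + d * k) * r2 = l := by linear_combination l * hc2.symm + d * e2
    have hll : l * l = 0 := by
      calc l * l = ((a * l + b * k) * r1) * ((c * l + d * k) * r2) := by rw [hα1, hβ2]
        _ = ((a * l + b * k) * r2) * ((c * l + d * k) * r1) := by ring
        _ = 0 := by rw [hα2, hβ1]; ring
    exact hl (by nlinarith)

theorem closure_pair_top {a b : G} (a' b' : ↥(closure ({a, b} : Set G)))
    (ha : (a' : G) = a) (hb : (b' : G) = b) :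
    closure ({a', b'} : Set ↥(closure ({a, b} : Set G))) = ⊤ := by
  set K := closure ({a, b} : Set G)
  apply Subgroup.map_injective K.subtype_injective
  rw [MonoidHom.map_closure, ← MonoidHom.range_eq_map, Subgroup.range_subtype]
  rw [Set.image_pair]
  simp only [Subgroup.coe_subtype, ha, hb]; rfl

/-- A free group with a nontrivial abelian normal subgroup is abelian. -/
theorem free_with_normal_abelian {G : Type*} [Group G] [IsFreeGroup G]
    (N : Subgroup G) [hN : N.Normal]
    (habN : ∀ a ∈ N, ∀ b ∈ N, a * b = b * a)
    {n : G} (hn : n ∈ N) (hn1 : n ≠ 1) :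
    ∀ x y : G, Commute x y := by
  classical
  -- Step 1: n is central in G.
  have central : ∀ u : G, Commute n u := by
    intro u
    set K : Subgroup G := closure ({n, u} : Set G) with hK
    have hnK : n ∈ K := subset_closure (by simp)
    have huK : u ∈ K := subset_closure (by simp)
    -- all commutators of elements of K lie in N
    have comm_mem : ∀ a ∈ K, ∀ b ∈ K, ⁅a, b⁆ ∈ N := by
      have proj : ∀ g ∈ K, ((g : G) : G ⧸ N) ∈ zpowers ((u : G) : G ⧸ N) := by
        intro g hg
        induction hg using closure_induction with
        | mem x hx =>
          rcases hx with rfl | rfl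
          · have hx1 : ((x : G) : G ⧸ N) = 1 := (QuotientGroup.eq_one_iff x).mpr hn
            rw [hx1]; exact one_mem _
          · exact Subgroup.mem_zpowers _
        | one => simpa using one_mem (zpowers ((u : G) : G ⧸ N))
        | mul x y hx hy ihx ihy => simpa using mul_mem ihx ihy
        | inv x hx ihx => simpa using inv_mem ihx
      intro a ha b hb
      obtain ⟨i, hi⟩ := Subgroup.mem_zpowers_iff.mp (proj a ha)
      obtain ⟨j, hj⟩ := Subgroup.mem_zpowers_iff.mp (proj b hb)
      have hcq : Commute ((a : G) : G ⧸ N) ((b : G) : G ⧸ N) := by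
        rw [← hi, ← hj]; exact (Commute.refl _).zpow_zpow i j
      have h1 : ((⁅a, b⁆ : G) : G ⧸ N) = 1 := by
        show (QuotientGroup.mk' N) ⁅a, b⁆ = 1
        rw [map_commutatorElement, commutatorElement_eq_one_iff_commute]
        exact hcq
      exact (QuotientGroup.eq_one_iff _).mp h1
    -- K is abelian
    have Kab : ∀ c d : ↥K, Commute c d := by
      by_cases h2 : ∀ p q : IsFreeGroup.Generators ↥K, p = q
      · obtain ⟨g₀, hg⟩ := exists_gen_of_no_two ↥K h2
        intro c d
        obtain ⟨i, hi⟩ := hg c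
        obtain ⟨j, hj⟩ := hg d
        rw [← hi, ← hj]
        exact (Commute.refl g₀).zpow_zpow i j
      · exfalso
        push_neg at h2
        obtain ⟨p, q, hpq⟩ := h2
        set op : ↥K := IsFreeGroup.of p with hop
        set oq : ↥K := IsFreeGroup.of q with hoq
        have m1 : (↑⁅op, oq⁆ : G) ∈ N := by
          have hcoe : (↑⁅op, oq⁆ : G) = ⁅(op : G), (oq : G)⁆ := by
            simp [commutatorElement_def]
          rw [hcoe]
          exact comm_mem _ op.2 _ oq.2
        have m2 : (↑⁅op, oq⁻¹⁆ : G) ∈ N := by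
          have hcoe : (↑⁅op, oq⁻¹⁆ : G) = ⁅(op : G), ((oq : G))⁻¹⁆ := by
            simp [commutatorElement_def]
          rw [hcoe]
          exact comm_mem _ op.2 _ (inv_mem oq.2)
        have hc : Commute (⁅op, oq⁆ : ↥K) ⁅op, oq⁻¹⁆ :=
          Subtype.ext (habN _ m1 _ m2)
        have hperm : ¬ Commute ⁅Equiv.swap (0 : Fin 5) 1, finRotate 5⁆
            ⁅Equiv.swap (0 : Fin 5) 1, (finRotate 5)⁻¹⁆ := by
          show ¬ (_ * _ = _ * _); decide
        have hmap := hc.map (IsFreeGroup.lift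
          (fun w : IsFreeGroup.Generators ↥K =>
            if w = p then (Equiv.swap (0 : Fin 5) 1) else if w = q then finRotate 5 else 1))
        rw [map_commutatorElement, map_commutatorElement, map_inv,
          IsFreeGroup.lift_of, IsFreeGroup.lift_of, if_pos rfl, if_neg (Ne.symm hpq),
          if_pos rfl] at hmap
        exact hperm hmap
    have hfin := Kab ⟨n, hnK⟩ ⟨u, huK⟩
    exact Subtype.ext_iff.mp hfin
  -- Step 2: any two elements commute.
  intro x y
  have habK1 : ∀ a ∈ closure ({n, x} : Set G), ∀ b ∈ closure ({n, x} : Set G),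
      Commute a b := by
    apply comm_closure
    intro a ha b hb
    rcases ha with rfl | rfl <;> rcases hb with rfl | rfl <;>
      first
        | exact Commute.refl _
        | exact central _
        | exact (central _).symm
  obtain ⟨g₁, hg₁⟩ := exists_gen_of_abelian ↥(closure ({n, x} : Set G))
    (subgroup_commute habK1)
  obtain ⟨k, hk⟩ := hg₁ ⟨n, subset_closure (by simp)⟩
  obtain ⟨i, hi⟩ := hg₁ ⟨x, subset_closure (by simp)⟩
  set r : G := (g₁ : G) with hr
  have hrk : r ^ k = n := by
    have h := congrArg (Subtype.val) hk
    simpa using h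
  have hri : r ^ i = x := by
    have h := congrArg (Subtype.val) hi
    simpa using h
  have habK2 : ∀ a ∈ closure ({n, y} : Set G), ∀ b ∈ closure ({n, y} : Set G),
      Commute a b := by
    apply comm_closure
    intro a ha b hb
    rcases ha with rfl | rfl <;> rcases hb with rfl | rfl <;>
      first
        | exact Commute.refl _
        | exact central _
        | exact (central _).symm
  obtain ⟨g₂, hg₂⟩ := exists_gen_of_abelian ↥(closure ({n, y} : Set G))
    (subgroup_commute habK2)
  obtain ⟨l, hl⟩ := hg₂ ⟨n, subset_closure (by simp)⟩
  obtain ⟨j, hj⟩ := hg₂ ⟨y, subset_closure (by simp)⟩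
  set s : G := (g₂ : G) with hs
  have hsl : s ^ l = n := by
    have h := congrArg (Subtype.val) hl
    simpa using h
  have hsj : s ^ j = y := by
    have h := congrArg (Subtype.val) hj
    simpa using h
  have hk0 : k ≠ 0 := by
    rintro rfl
    rw [zpow_zero] at hrk
    exact hn1 hrk.symm
  have hl0 : l ≠ 0 := by
    rintro rfl
    rw [zpow_zero] at hsl
    exact hn1 hsl.symm
  set r' : ↥(closure ({r, s} : Set G)) := ⟨r, subset_closure (by simp)⟩ with hr'
  set s' : ↥(closure ({r, s} : Set G)) := ⟨s, subset_closure (by simp)⟩ with hs'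
  have hpow : r' ^ k = s' ^ l := by
    apply Subtype.ext
    rw [SubgroupClass.coe_zpow, SubgroupClass.coe_zpow]
    exact hrk.trans hsl.symm
  have hgen : closure ({r', s'} : Set ↥(closure ({r, s} : Set G))) = ⊤ :=
    closure_pair_top r' s' rfl rfl
  have hcomm' := commute_of_common_power hk0 hl0 hpow hgen
  have hrscomm : Commute r s := by
    have h := congrArg (Subtype.val) hcomm'
    simpa [commute_iff_eq] using h
  rw [← hri, ← hsj]
  exact hrscomm.zpow_zpow i j

end LimitGroupAux

/-- A limit group: a finitely generated group that is fully residually free, i.e. for every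
finite subset `T` there is a homomorphism to a finitely generated free group injective on `T`. -/
def IsLimitGroup (L : Type*) [Group L] : Prop :=
  Group.FG L ∧
    ∀ T : Finset L, ∃ (m : ℕ) (f : L →* FreeGroup (Fin m)), Set.InjOn f (T : Set L)

/-- A limit group containing a nontrivial abelian normal subgroup is abelian. -/
theorem limit_group_with_nontrivial_abelian_normal_subgroup_is_abelian
    (Γ : Type u) [Group Γ] (hΓ : IsLimitGroup Γ)
    (A : Subgroup Γ) (hnormal : A.Normal) (hA : A ≠ ⊥)
    (hab : ∀ x ∈ A, ∀ y ∈ A, x * y = y * x) :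
    ∀ x y : Γ, x * y = y * x := by
  classical
  obtain ⟨-, hres⟩ := hΓ
  intro x y
  obtain ⟨⟨a, haA⟩, ha1⟩ := Subgroup.ne_bot_iff_exists_ne_one.mp hA
  have ha1' : a ≠ 1 := fun h => ha1 (by simp [Subtype.ext_iff, h])
  obtain ⟨m, f, hf⟩ := hres {1, a, x * y, y * x}
  set H : Subgroup (FreeGroup (Fin m)) := f.range with hH
  set N : Subgroup ↥H := Subgroup.comap H.subtype (A.map f) with hN
  haveI hNnorm : N.Normal := by
    constructor
    rintro g hg h
    obtain ⟨α, hαA, hα⟩ := hg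
    obtain ⟨w, hw⟩ := h.2
    simp only [Subgroup.coe_subtype] at hα
    show ((h * g * h⁻¹ : ↥H) : FreeGroup (Fin m)) ∈ A.map f
    refine ⟨w * α * w⁻¹, hnormal.conj_mem α hαA w, ?_⟩
    push_cast
    rw [map_mul, map_mul, map_inv, hα, hw]
  have habN : ∀ a ∈ N, ∀ b ∈ N, a * b = b * a := by
    rintro u hu v hv
    obtain ⟨α, hαA, hα⟩ := hu
    obtain ⟨β, hβA, hβ⟩ := hv
    simp only [Subgroup.coe_subtype] at hα hβ
    apply Subtype.ext
    push_cast
    rw [← hα, ← hβ, ← map_mul, ← map_mul, hab α hαA β hβA]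
  have hfa1 : f a ≠ 1 := by
    intro h
    apply ha1'
    apply hf (by simp) (by simp)
    rw [h, map_one]
  have hnN : (⟨f a, ⟨a, rfl⟩⟩ : ↥H) ∈ N := ⟨a, haA, rfl⟩
  have hn1 : (⟨f a, ⟨a, rfl⟩⟩ : ↥H) ≠ 1 := by
    intro h
    exact hfa1 (congrArg Subtype.val h)
  have hcomm := LimitGroupAux.free_with_normal_abelian N habN hnN hn1
    ⟨f x, ⟨x, rfl⟩⟩ ⟨f y, ⟨y, rfl⟩⟩
  have hfcomm : f x * f y = f y * f x := congrArg Subtype.val hcomm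
  apply hf (by simp) (by simp)
  rw [map_mul, map_mul, hfcomm]
end
end

section
/- Let G be a fully residually free group containing an abelian subgroup of finite index. Then G is abelian. -/
noncomputable section

universe u

/-- A group is fully residually free if for every finite subset `T` there is a homomorphism
to a finitely generated free group that is injective on `T`. -/
def IsFullyResiduallyFree (G : Type*) [Group G] : Prop :=
  ∀ T : Finset G, ∃ (m : ℕ) (f : G →* FreeGroup (Fin m)), Set.InjOn f (T : Set G)

section Aux
open Subgroup

-- distinct generators of a free group do not commute
theorem FreeGroupAux.not_commute_of {S : Type u} {s t : S} (hst : s ≠ t) :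
    ¬ Commute (FreeGroup.of s) (FreeGroup.of t) := by
  classical
  intro h
  have h2 := congrArg (FreeGroup.lift
    (fun x : S => if x = s then Equiv.swap (0 : Fin 3) 1 else Equiv.swap 1 2)) h
  simp only [map_mul, FreeGroup.lift_apply_of, if_pos rfl, if_neg (Ne.symm hst)] at h2
  have : (Equiv.swap (0 : Fin 3) 1) * (Equiv.swap 1 2)
      = (Equiv.swap 1 2) * (Equiv.swap (0 : Fin 3) 1) := h2
  exact absurd this (by decide)

-- a free group all of whose generators are equal is cyclic
theorem FreeGroupAux.cyclic_of_subsingleton {S : Type u} (hS : ∀ s t : S, s = t) :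
    ∃ c : FreeGroup S, ∀ x : FreeGroup S, x ∈ Subgroup.zpowers c := by
  by_cases hne : Nonempty S
  · obtain ⟨s0⟩ := hne
    refine ⟨FreeGroup.of s0, fun x => ?_⟩
    induction x using FreeGroup.induction_on with
    | C1 => exact one_mem _
    | of s => rw [hS s s0]; exact mem_zpowers _
    | inv_of s ih => exact inv_mem ih
    | mul a b iha ihb => exact mul_mem iha ihb
  · refine ⟨1, fun x => ?_⟩
    induction x using FreeGroup.induction_on with
    | C1 => exact one_mem _
    | of s => exact absurd ⟨s⟩ hne
    | inv_of s ih => exact inv_mem ih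
    | mul a b iha ihb => exact mul_mem iha ihb

-- an abelian free group is cyclic
theorem IsFreeGroupAux.cyclic_of_comm (H : Type u) [Group H] [IsFreeGroup H]
    (h : ∀ x y : H, x * y = y * x) : ∃ c : H, ∀ x : H, x ∈ Subgroup.zpowers c := by
  set e := IsFreeGroup.toFreeGroup H with he
  have hS : ∀ s t : IsFreeGroup.Generators H, s = t := by
    by_contra hc
    push_neg at hc
    obtain ⟨s, t, hst⟩ := hc
    exact FreeGroupAux.not_commute_of hst
      (by simpa [Commute, SemiconjBy] using congrArg e (h (e.symm (FreeGroup.of s)) (e.symm (FreeGroup.of t))))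
  obtain ⟨c, hc⟩ := FreeGroupAux.cyclic_of_subsingleton hS
  refine ⟨e.symm c, fun x => ?_⟩
  obtain ⟨n, hn⟩ := hc (e x)
  exact ⟨n, by simpa using congrArg e.symm (hn ▸ (rfl : c ^ n = c ^ n) : c ^ n = e x)⟩

-- two commuting elements of a free group lie in a common cyclic subgroup (Nielsen-Schreier)
theorem IsFreeGroupAux.exists_zpowers_of_commute {G : Type u} [Group G] [IsFreeGroup G]
    {a b : G} (h : Commute a b) :
    ∃ c : G, a ∈ Subgroup.zpowers c ∧ b ∈ Subgroup.zpowers c := by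
  set H : Subgroup G := Subgroup.closure {a, b} with hH
  have hcomm : ∀ x ∈ ({a, b} : Set G), ∀ y ∈ ({a, b} : Set G), x * y = y * x := by
    rintro x (rfl | rfl) y (rfl | rfl) <;> first | rfl | exact h | exact h.symm
  have habel : ∀ x y : H, x * y = y * x := by
    intro x y
    have := Subgroup.closure_le_centralizer_centralizer ({a, b} : Set G)
    exact Subtype.ext_iff.mpr (Set.centralizer_centralizer_comm_of_comm hcomm _ (this x.2) _ (this y.2))
  obtain ⟨c, hc⟩ := IsFreeGroupAux.cyclic_of_comm H habel
  have ha : a ∈ H := Subgroup.subset_closure (by simp)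
  have hb : b ∈ H := Subgroup.subset_closure (by simp)
  refine ⟨(c : G), ?_, ?_⟩
  · obtain ⟨n, hn⟩ := hc ⟨a, ha⟩
    exact ⟨n, by simpa using congrArg (Subtype.val) hn⟩
  · obtain ⟨n, hn⟩ := hc ⟨b, hb⟩
    exact ⟨n, by simpa using congrArg (Subtype.val) hn⟩

theorem FreeGroupAux.eq_one_of_isEmpty {S : Type u} (hS : IsEmpty S) (x : FreeGroup S) :
    x = 1 := by
  induction x using FreeGroup.induction_on with
  | C1 => rfl
  | of s => exact hS.elim s
  | inv_of s ih => rw [ih, inv_one]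
  | mul a b iha ihb => rw [iha, ihb, one_mul]

theorem IsFreeGroupAux.eq_one_of_finite {G : Type u} [Group G] [IsFreeGroup G]
    (hfin : Finite G) (x : G) : x = 1 := by
  set e := IsFreeGroup.toFreeGroup G
  by_cases hne : Nonempty (IsFreeGroup.Generators G)
  · obtain ⟨s⟩ := hne
    exfalso
    have hinj : Function.Injective (fun n : ℤ => (FreeGroup.of s) ^ n) := by
      intro i j hij
      have h2 := congrArg (FreeGroup.lift (fun _ : IsFreeGroup.Generators G =>
        (Multiplicative.ofAdd (1 : ℤ)))) hij
      simp only [map_zpow, FreeGroup.lift_apply_of] at h2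
      simpa using congrArg Multiplicative.toAdd h2
    have h1 : Finite (FreeGroup (IsFreeGroup.Generators G)) := Finite.of_equiv G e.toEquiv
    have h2 : Infinite (FreeGroup (IsFreeGroup.Generators G)) := Infinite.of_injective _ hinj
    exact not_finite (FreeGroup (IsFreeGroup.Generators G))
  · have := FreeGroupAux.eq_one_of_isEmpty (not_nonempty_iff.mp hne) (e x)
    simpa using congrArg e.symm this

-- free groups are torsion-free
theorem IsFreeGroupAux.eq_one_of_pow_eq_one {G : Type u} [Group G] [IsFreeGroup G]
    {a : G} {n : ℕ} (hn : n ≠ 0) (h : a ^ n = 1) : a = 1 := by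
  have hfo : IsOfFinOrder a := isOfFinOrder_iff_pow_eq_one.mpr ⟨n, Nat.pos_of_ne_zero hn, h⟩
  have hfin : Finite (Subgroup.zpowers a) :=
    Set.Finite.to_subtype (finite_zpowers.mpr hfo)
  have := IsFreeGroupAux.eq_one_of_finite hfin ⟨a, Subgroup.mem_zpowers a⟩
  simpa using congrArg Subtype.val this

-- a free group with a nontrivial central element is abelian
theorem IsFreeGroupAux.comm_of_central {G : Type u} [Group G] [IsFreeGroup G]
    {g : G} (hg : g ≠ 1) (hc : ∀ x : G, g * x = x * g) : ∀ x y : G, x * y = y * x := by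
  classical
  set e := IsFreeGroup.toFreeGroup G with he
  set S := IsFreeGroup.Generators G with hSdef
  by_cases hS : ∀ s t : S, s = t
  · obtain ⟨c, hcyc⟩ := FreeGroupAux.cyclic_of_subsingleton hS
    intro x y
    obtain ⟨i, hi⟩ := hcyc (e x)
    obtain ⟨j, hj⟩ := hcyc (e y)
    have : e (x * y) = e (y * x) := by
      simp only [map_mul, ← hi, ← hj, ← zpow_add, add_comm]
    exact e.injective this
  · exfalso
    push_neg at hS
    obtain ⟨s, t, hst⟩ := hS
    set w := e g with hw
    have hwne : w ≠ 1 := fun hh => hg (e.injective (hh.trans (map_one e).symm))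
    have hwc : ∀ z : FreeGroup S, w * z = z * w := fun z => by
      simpa using congrArg e (hc (e.symm z))
    -- w is a power of each generator
    have key : ∀ s : S, ∃ p : ℤ, w = (FreeGroup.of s) ^ p := by
      intro s
      obtain ⟨c, hcw, hcs⟩ :=
        IsFreeGroupAux.exists_zpowers_of_commute (a := w) (b := FreeGroup.of s) (hwc _)
      rw [Subgroup.mem_zpowers_iff] at hcw hcs
      obtain ⟨m, hm⟩ := hcw
      obtain ⟨i, hi⟩ := hcs
      set φ := FreeGroup.lift (fun x : S => Multiplicative.ofAdd (if x = s then (1:ℤ) else 0))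
        with hφ
      have hφs : φ (FreeGroup.of s) = Multiplicative.ofAdd 1 := by simp [hφ]
      have hmul : i * Multiplicative.toAdd (φ c) = 1 := by
        have := congrArg (fun z => Multiplicative.toAdd (φ z)) hi
        simpa [map_zpow, toAdd_zpow, hφs, smul_eq_mul] using this
      have hiu : IsUnit i := IsUnit.of_mul_eq_one _ hmul
      rcases Int.isUnit_iff.mp hiu with rfl | rfl
      · rw [zpow_one] at hi
        exact ⟨m, by rw [← hm, hi]⟩
      · have : c = (FreeGroup.of s)⁻¹ := by
          rw [← hi]; simp
        exact ⟨-m, by rw [← hm, this]; simp [zpow_neg, inv_zpow]⟩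
    obtain ⟨p, hp⟩ := key s
    obtain ⟨q, hq⟩ := key t
    set φ := FreeGroup.lift (fun x : S => Multiplicative.ofAdd (if x = s then (1:ℤ) else 0))
      with hφ
    have h1 : Multiplicative.toAdd (φ w) = p := by
      rw [hp]; simp [hφ, map_zpow, toAdd_zpow]
    have h2 : Multiplicative.toAdd (φ w) = 0 := by
      rw [hq]; simp [hφ, map_zpow, toAdd_zpow, if_neg (Ne.symm hst)]
    have hp0 : p = 0 := h1.symm.trans h2
    exact hwne (by rw [hp, hp0, zpow_zero])

-- commutation with a common nontrivial element implies commutation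
theorem IsFreeGroupAux.commute_trans {G : Type u} [Group G] [IsFreeGroup G]
    {g x y : G} (hg : g ≠ 1) (hx : Commute x g) (hy : Commute y g) : Commute x y := by
  set C : Subgroup G := Subgroup.centralizer {g} with hC
  have hmem : ∀ z : G, Commute z g → z ∈ C := fun z hz =>
    Subgroup.mem_centralizer_iff.mpr (by rintro h rfl; exact hz.symm)
  have hgC : g ∈ C := hmem g (Commute.refl g)
  have hxC : x ∈ C := hmem x hx
  have hyC : y ∈ C := hmem y hy
  have hcen : ∀ z : C, (⟨g, hgC⟩ : C) * z = z * ⟨g, hgC⟩ := by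
    rintro ⟨z, hz⟩
    exact Subtype.ext (Subgroup.mem_centralizer_iff.mp hz g rfl)
  have hgne : (⟨g, hgC⟩ : C) ≠ 1 := fun hh => hg (by simpa using congrArg Subtype.val hh)
  have := IsFreeGroupAux.comm_of_central hgne hcen ⟨x, hxC⟩ ⟨y, hyC⟩
  exact congrArg Subtype.val this

-- the key free-group fact: commuting k-th powers implies commuting elements
theorem IsFreeGroupAux.commute_of_pow_commute {G : Type u} [Group G] [IsFreeGroup G]
    {u v : G} {k : ℕ} (hk : k ≠ 0) (h : u ^ k * v ^ k = v ^ k * u ^ k) : u * v = v * u := by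
  by_cases hu : u ^ k = 1
  · rw [IsFreeGroupAux.eq_one_of_pow_eq_one hk hu, one_mul, mul_one]
  by_cases hv : v ^ k = 1
  · rw [IsFreeGroupAux.eq_one_of_pow_eq_one hk hv, one_mul, mul_one]
  have h1 : Commute u (v ^ k) :=
    IsFreeGroupAux.commute_trans hu ((Commute.refl u).pow_right k) h.symm
  have h2 : Commute u v :=
    IsFreeGroupAux.commute_trans hv h1 ((Commute.refl v).pow_right k)
  exact h2


end Aux

/-- A fully residually free group with an abelian subgroup of finite index is abelian. -/
theorem fully_residually_free_virtually_abelian_is_abelian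
    (G : Type u) [Group G] (hG : IsFullyResiduallyFree G)
    (A : Subgroup G) (hA : A.FiniteIndex)
    (hab : ∀ x ∈ A, ∀ y ∈ A, x * y = y * x) :
    ∀ x y : G, x * y = y * x := by
  classical
  intro x y
  set N := A.normalCore with hN
  haveI : N.FiniteIndex := Subgroup.finiteIndex_normalCore A
  set n := N.index with hn
  have hn0 : n ≠ 0 := Subgroup.FiniteIndex.index_ne_zero
  have hpow : ∀ g : G, g ^ n ∈ A := fun g => A.normalCore_le (N.pow_index_mem g)
  obtain ⟨m, f, hinj⟩ := hG {x * y, y * x}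
  have hcomm : (f x) ^ n * (f y) ^ n = (f y) ^ n * (f x) ^ n := by
    have := hab (x ^ n) (hpow x) (y ^ n) (hpow y)
    simpa [map_mul, map_pow] using congrArg f this
  have := IsFreeGroupAux.commute_of_pow_commute hn0 hcomm
  have hf : f (x * y) = f (y * x) := by simpa [map_mul] using this
  exact hinj (by simp) (by simp) hf
end
end

section
/- Let A be the automorphism of ℤ² given by the matrix [[2,1],[1,1]], let G = ℤ² ⋊ ℤ be the semidirect product in which the generator of ℤ acts by A, and let S be the subgroup {(0, m) : m ∈ ℤ} of G. Then there do NOT exist a finite-index subgroup K of G and a surjective homomorphism f : K → ℤ such that S ∩ K is contained in the kernel of f. (Thus the conclusion of the lemma on finitely generated virtually nilpotent groups fails for this polycyclic group.) -/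
noncomputable section

universe u

/-- The automorphism of `ℤ²` given by the matrix `[[2,1],[1,1]]`. -/
def solMatrixAut : (ℤ × ℤ) ≃+ (ℤ × ℤ) where
  toFun p := (2 * p.1 + p.2, p.1 + p.2)
  invFun p := (p.1 - p.2, -p.1 + 2 * p.2)
  left_inv := by rintro ⟨x, y⟩; simp only [Prod.mk.injEq]; omega
  right_inv := by rintro ⟨x, y⟩; simp only [Prod.mk.injEq]; omega
  map_add' := by rintro ⟨x, y⟩ ⟨a, b⟩; simp only [Prod.fst_add, Prod.snd_add, Prod.mk_add_mk,
    Prod.mk.injEq]; omega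

/-- The action of `ℤ` on `ℤ²` in which the generator acts by `solMatrixAut`
(so `k` acts by its `k`-th power). -/
def solAction : Multiplicative ℤ →* MulAut (Multiplicative (ℤ × ℤ)) :=
  zpowersHom (MulAut (Multiplicative (ℤ × ℤ))) (AddEquiv.toMultiplicative solMatrixAut)

/-- The lattice `G = ℤ² ⋊ ℤ` in the Lie group `Sol` determined by the matrix
`[[2,1],[1,1]]`. -/
abbrev SolLattice : Type :=
  Multiplicative (ℤ × ℤ) ⋊[solAction] Multiplicative ℤ

/-- The subgroup `{(0, m) : m ∈ ℤ}` of `SolLattice`. -/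
def solZ : Subgroup SolLattice :=
  (SemidirectProduct.inr : Multiplicative ℤ →* SolLattice).range

/-- Powers of the action have a symmetric positive matrix of determinant one whose
diagonal entries sum against the off-diagonal one. -/
lemma solAction_pow_apply (n : ℕ) : ∃ a b c : ℤ, a = b + c ∧ 1 ≤ b ∧ 1 ≤ c ∧
    a * c - b * b = 1 ∧ ∀ v : ℤ × ℤ,
      solAction (Multiplicative.ofAdd ((n : ℤ) + 1)) (Multiplicative.ofAdd v)
        = Multiplicative.ofAdd (a * v.1 + b * v.2, b * v.1 + c * v.2) := by
  induction n with
  | zero =>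
    refine ⟨2, 1, 1, by norm_num, le_refl _, le_refl _, by norm_num, fun v => ?_⟩
    simp [solAction, zpowersHom_apply, solMatrixAut]
  | succ k ih =>
    obtain ⟨a, b, c, habc, hb, hc, hdet, hA⟩ := ih
    refine ⟨2*a+b, a+b, a, by omega, by omega, by omega, by nlinarith, fun v => ?_⟩
    have h1 : (((k+1:ℕ)):ℤ) + 1 = ((k:ℤ) + 1) + 1 := by push_cast; ring
    rw [h1]
    have h2 : solAction (Multiplicative.ofAdd (((k:ℤ)+1)+1)) (Multiplicative.ofAdd v)
        = solAction (Multiplicative.ofAdd ((k:ℤ)+1))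
            (solAction (Multiplicative.ofAdd 1) (Multiplicative.ofAdd v)) := by
      rw [← MulAut.mul_apply, ← map_mul]; rfl
    have h3 : solAction (Multiplicative.ofAdd (1:ℤ)) (Multiplicative.ofAdd v)
        = Multiplicative.ofAdd (2 * v.1 + v.2, v.1 + v.2) := by
      simp [solAction, zpowersHom_apply, solMatrixAut]
    rw [h2, h3, hA]
    congr 1
    simp only [Prod.mk.injEq]
    constructor <;> (subst habc; ring)

/-- The conclusion of Lemma 8.1 fails for the polycyclic group `SolLattice` and its
subgroup `solZ = {(0, m)}`: there is no finite-index subgroup `K ≤ G` with an epimorphism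
`f : K → ℤ` killing `solZ ∩ K`. -/
theorem solLattice_no_finite_index_epimorphism_to_Z_killing_solZ :
    ¬ ∃ K : Subgroup SolLattice, K.FiniteIndex ∧
        ∃ f : ↥K →* Multiplicative ℤ, Function.Surjective f ∧
          ∀ (x : SolLattice) (hx : x ∈ K), x ∈ solZ → f ⟨x, hx⟩ = 1 := by
  rintro ⟨K, hK, f, hsurj, hkill⟩
  have hidx : K.index ≠ 0 := hK.index_ne_zero
  set φ : ℤ × ℤ → SolLattice := fun v => SemidirectProduct.inl (Multiplicative.ofAdd v) with hφ
  have φ_zpow : ∀ (k : ℤ) (v : ℤ × ℤ), φ (k • v) = (φ v) ^ k := fun k v => by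
    rw [hφ]; dsimp only; rw [ofAdd_zsmul, map_zpow]
  have φ_add : ∀ v w : ℤ × ℤ, φ (v + w) = φ v * φ w := fun v w => by
    rw [hφ]; dsimp only; rw [ofAdd_add, map_mul]
  -- a power of the generator of the ℤ-factor lies in K
  obtain ⟨n, hnpos, -, hn⟩ := Subgroup.exists_pow_mem_of_index_ne_zero hidx
    (SemidirectProduct.inr (Multiplicative.ofAdd (1:ℤ)))
  have htK : (SemidirectProduct.inr (Multiplicative.ofAdd (n:ℤ)) : SolLattice) ∈ K := by
    have h : (SemidirectProduct.inr (Multiplicative.ofAdd (1:ℤ)) : SolLattice) ^ n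
        = SemidirectProduct.inr (Multiplicative.ofAdd (n:ℤ)) := by
      rw [← map_pow]; congr 1
      rw [← ofAdd_nsmul]; congr 1; simp
    rwa [h] at hn
  set t : ↥K := ⟨SemidirectProduct.inr (Multiplicative.ofAdd (n:ℤ)), htK⟩ with ht
  have hft : f t = 1 := hkill _ _ ⟨Multiplicative.ofAdd (n:ℤ), rfl⟩
  -- powers of the generators of ℤ² in K
  obtain ⟨m₁, hm₁pos, -, hm₁⟩ := Subgroup.exists_pow_mem_of_index_ne_zero hidx (φ (1, 0))
  obtain ⟨m₂, hm₂pos, -, hm₂⟩ := Subgroup.exists_pow_mem_of_index_ne_zero hidx (φ (0, 1))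
  set m : ℕ := m₁ * m₂ with hm
  have hmpos : 0 < m := Nat.mul_pos hm₁pos hm₂pos
  have hPm1 : φ ((m:ℤ), 0) ∈ K := by
    have h : φ ((m:ℤ), 0) = ((φ (1, 0)) ^ m₁) ^ m₂ := by
      have : ((m:ℤ), (0:ℤ)) = (m:ℤ) • ((1:ℤ), (0:ℤ)) := by simp
      rw [this, φ_zpow, zpow_natCast, hm, pow_mul]
    rw [h]; exact pow_mem hm₁ m₂
  have hPm2 : φ (0, (m:ℤ)) ∈ K := by
    have h : φ (0, (m:ℤ)) = ((φ (0, 1)) ^ m₂) ^ m₁ := by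
      have : ((0:ℤ), (m:ℤ)) = (m:ℤ) • ((0:ℤ), (1:ℤ)) := by simp
      rw [this, φ_zpow, zpow_natCast, hm, mul_comm m₁ m₂, pow_mul]
    rw [h]; exact pow_mem hm₂ m₁
  -- the matrix of the action of `n`
  obtain ⟨a, b, c, habc, hb, hc, hdet, hA⟩ := solAction_pow_apply (n - 1)
  have hAn : ∀ v : ℤ × ℤ, solAction (Multiplicative.ofAdd (n:ℤ)) (Multiplicative.ofAdd v)
      = Multiplicative.ofAdd (a * v.1 + b * v.2, b * v.1 + c * v.2) := by
    intro v
    have hcast : ((n - 1 : ℕ) : ℤ) + 1 = (n:ℤ) := by omega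
    rw [← hcast]; exact hA v
  -- conjugation by t preserves f-values on the lattice part
  have hconjK : ∀ (v : ℤ × ℤ) (hv : φ v ∈ K),
      ∃ hw : φ (a * v.1 + b * v.2, b * v.1 + c * v.2) ∈ K,
        f ⟨φ (a * v.1 + b * v.2, b * v.1 + c * v.2), hw⟩ = f ⟨φ v, hv⟩ := by
    intro v hv
    have hcoe : φ (a * v.1 + b * v.2, b * v.1 + c * v.2)
        = SemidirectProduct.inr (Multiplicative.ofAdd (n:ℤ)) * φ v
          * SemidirectProduct.inr (Multiplicative.ofAdd (n:ℤ))⁻¹ := by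
      rw [hφ]; dsimp only
      rw [← hAn v]
      exact SemidirectProduct.inl_aut _ _
    have hw : φ (a * v.1 + b * v.2, b * v.1 + c * v.2) ∈ K := by
      rw [hcoe, map_inv]; exact mul_mem (mul_mem htK hv) (inv_mem htK)
    refine ⟨hw, ?_⟩
    have heq : (⟨φ (a * v.1 + b * v.2, b * v.1 + c * v.2), hw⟩ : ↥K)
        = t * ⟨φ v, hv⟩ * t⁻¹ := Subtype.ext (by simpa [map_inv] using hcoe)
    rw [heq, map_mul, map_mul, map_inv, hft]
    group
  -- the f-values of the generators of the finite-index lattice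
  set x := f ⟨φ ((m:ℤ), 0), hPm1⟩ with hx
  set y := f ⟨φ (0, (m:ℤ)), hPm2⟩ with hy
  set α := Multiplicative.toAdd x with hα
  set β := Multiplicative.toAdd y with hβ
  have hdecomp : ∀ (r s : ℤ), ∃ h : φ (r * (m:ℤ), s * (m:ℤ)) ∈ K,
      f ⟨φ (r * (m:ℤ), s * (m:ℤ)), h⟩ = x ^ r * y ^ s := by
    intro r s
    have hsplit : ((r * (m:ℤ), s * (m:ℤ)) : ℤ × ℤ)
        = r • ((m:ℤ), (0:ℤ)) + s • ((0:ℤ), (m:ℤ)) := by simp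
    have hcoe : φ (r * (m:ℤ), s * (m:ℤ)) = (φ ((m:ℤ), 0)) ^ r * (φ (0, (m:ℤ))) ^ s := by
      rw [hsplit, φ_add, φ_zpow, φ_zpow]
    have h : φ (r * (m:ℤ), s * (m:ℤ)) ∈ K := by
      rw [hcoe]; exact mul_mem (zpow_mem hPm1 r) (zpow_mem hPm2 s)
    refine ⟨h, ?_⟩
    have heq : (⟨φ (r * (m:ℤ), s * (m:ℤ)), h⟩ : ↥K)
        = (⟨φ ((m:ℤ), 0), hPm1⟩ : ↥K) ^ r * (⟨φ (0, (m:ℤ)), hPm2⟩ : ↥K) ^ s :=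
      Subtype.ext (by push_cast; simpa using hcoe)
    rw [heq, map_mul, map_zpow, map_zpow, hx, hy]
  -- the invariance equations
  have e1 : a * α + b * β = α := by
    obtain ⟨h1, hf1⟩ := hconjK ((m:ℤ), 0) hPm1
    obtain ⟨h2, hf2⟩ := hdecomp a b
    have hveq : (⟨φ (a * (m:ℤ), b * (m:ℤ)), h2⟩ : ↥K)
        = ⟨φ (a * ((m:ℤ), (0:ℤ)).1 + b * ((m:ℤ), (0:ℤ)).2,
            b * ((m:ℤ), (0:ℤ)).1 + c * ((m:ℤ), (0:ℤ)).2), h1⟩ :=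
      Subtype.ext (by norm_num)
    have hxy : x ^ a * y ^ b = x :=
      hf2.symm.trans ((congrArg f hveq).trans (hf1.trans hx.symm))
    have h := congrArg Multiplicative.toAdd hxy
    simpa [toAdd_mul, toAdd_zpow, smul_eq_mul, ← hα, ← hβ] using h
  have e2 : b * α + c * β = β := by
    obtain ⟨h1, hf1⟩ := hconjK (0, (m:ℤ)) hPm2
    obtain ⟨h2, hf2⟩ := hdecomp b c
    have hveq : (⟨φ (b * (m:ℤ), c * (m:ℤ)), h2⟩ : ↥K)
        = ⟨φ (a * ((0:ℤ), (m:ℤ)).1 + b * ((0:ℤ), (m:ℤ)).2,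
            b * ((0:ℤ), (m:ℤ)).1 + c * ((0:ℤ), (m:ℤ)).2), h1⟩ :=
      Subtype.ext (by norm_num)
    have hxy : x ^ b * y ^ c = y :=
      hf2.symm.trans ((congrArg f hveq).trans (hf1.trans hy.symm))
    have h := congrArg Multiplicative.toAdd hxy
    simpa [toAdd_mul, toAdd_zpow, smul_eq_mul, ← hα, ← hβ] using h
  -- the matrix has no fixed vector, so α = β = 0
  have hα0 : α = 0 := by
    have key : (2 - a - c) * α = 0 := by linear_combination (c-1)*e1 - b*e2 - α*hdet
    rcases mul_eq_zero.1 key with h | h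
    · omega
    · exact h
  have hβ0 : β = 0 := by
    rw [hα0] at e1
    have : b * β = 0 := by omega
    rcases mul_eq_zero.1 this with h | h
    · omega
    · exact h
  have hx1 : x = 1 := by
    have : Multiplicative.toAdd x = 0 := hα0
    simpa using congrArg Multiplicative.ofAdd this
  have hy1 : y = 1 := by
    have : Multiplicative.toAdd y = 0 := hβ0
    simpa using congrArg Multiplicative.ofAdd this
  -- hence f kills the whole lattice part of K
  have hzero : ∀ (v : ℤ × ℤ) (hv : φ v ∈ K), f ⟨φ v, hv⟩ = 1 := by
    intro v hv
    obtain ⟨h2, hf2⟩ := hdecomp v.1 v.2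
    have hveq : ((v.1 * (m:ℤ), v.2 * (m:ℤ)) : ℤ × ℤ) = (m:ℤ) • v := by
      obtain ⟨v1, v2⟩ := v
      simp only [Prod.smul_mk, smul_eq_mul, Prod.mk.injEq]
      constructor <;> ring
    have hpow : (⟨φ ((v.1 * (m:ℤ), v.2 * (m:ℤ)) : ℤ × ℤ), h2⟩ : ↥K)
        = (⟨φ v, hv⟩ : ↥K) ^ (m:ℤ) := by
      refine Subtype.ext ?_
      push_cast
      rw [hveq, φ_zpow]
    have : (f ⟨φ v, hv⟩) ^ (m:ℤ) = 1 := by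
      rw [← map_zpow, ← hpow, hf2, hx1, hy1, one_zpow, one_zpow, one_mul]
    have h0 := congrArg Multiplicative.toAdd this
    simp only [toAdd_zpow, smul_eq_mul, toAdd_one] at h0
    have : Multiplicative.toAdd (f ⟨φ v, hv⟩) = 0 := by
      have hm0 : (m:ℤ) ≠ 0 := by exact_mod_cast hmpos.ne'
      exact (mul_eq_zero.1 h0).resolve_left hm0
    simpa using congrArg Multiplicative.ofAdd this
  -- final contradiction using surjectivity
  obtain ⟨k, hfk⟩ := hsurj (Multiplicative.ofAdd 1)
  set p : ℤ := Multiplicative.toAdd (((k : SolLattice)).right) with hp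
  set u : ↥K := k ^ n * t ^ (-p) with hu
  have hright : ((u : SolLattice)).right = 1 := by
    have h1 : (u : SolLattice) = (k : SolLattice) ^ n * (t : SolLattice) ^ (-p) := by
      push_cast; rfl
    have h2 := congrArg SemidirectProduct.rightHom h1
    rw [map_mul, map_pow, map_zpow] at h2
    rw [ht] at h2
    simp only [SemidirectProduct.rightHom_eq_right, SemidirectProduct.right_inr] at h2
    have h3 : Multiplicative.toAdd (((u : SolLattice)).right) = 0 := by
      rw [show ((u : SolLattice)).right
        = ((k:SolLattice).right) ^ n * (Multiplicative.ofAdd (n:ℤ)) ^ (-p) from h2]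
      simp only [toAdd_mul, toAdd_pow, toAdd_zpow, toAdd_ofAdd, smul_eq_mul,
        nsmul_eq_mul]
      rw [← hp]; ring
    have := congrArg Multiplicative.ofAdd h3
    simpa using this
  have huφ : (u : SolLattice) = φ (Multiplicative.toAdd ((u : SolLattice)).left) := by
    rw [hφ]; dsimp only
    rw [ofAdd_toAdd]
    conv_lhs => rw [← SemidirectProduct.inl_left_mul_inr_right (u : SolLattice)]
    rw [hright]
    simp
  have hwK : φ (Multiplicative.toAdd ((u : SolLattice)).left) ∈ K := huφ ▸ u.2
  have h1 : f u = 1 := by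
    have : u = ⟨φ (Multiplicative.toAdd ((u : SolLattice)).left), hwK⟩ := Subtype.ext huφ
    rw [this]; exact hzero _ hwK
  have h2 : f u = Multiplicative.ofAdd (n:ℤ) := by
    rw [hu, map_mul, map_pow, map_zpow, hfk, hft]
    simp only [one_zpow, mul_one]
    rw [← ofAdd_nsmul]; congr 1; simp
  rw [h2] at h1
  have := congrArg Multiplicative.toAdd h1
  simp only [toAdd_ofAdd, toAdd_one] at this
  omega
end
end
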